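/- In a suffix-clean instance of Stable Marriage, every person a not matched by the man-optimal stable matching μ_M has an empty set of acceptable partners, A(a) = ∅. -/
import Mathlib


open scoped Classical

/-- A Stable Marriage instance: `acc` is the mutual acceptability relation,
`pm m w` is man `m`'s preference value for woman `w` (lower = better),
`pw w m` is woman `w`'s preference value for man `m`. -/
structure SMInst (M W : Type*) where
  acc : M → W → Prop
  pm : M → W → ℕ
  pw : W → M → ℕ

namespace SMInst

variable {M W : Type*} (I : SMInst M W)

/-- A matching, encoded as a relation: matched pairs are acceptable and
each person appears in at most one pair. -/
def IsMatching (r : M → W → Prop) : Prop :=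
  (∀ m w, r m w → I.acc m w) ∧
  (∀ m w w', r m w → r m w' → w = w') ∧
  (∀ m m' w, r m w → r m' w → m = m')

/-- `m` is matched by `r`. -/
def MMatched (r : M → W → Prop) (m : M) : Prop := ∃ w, r m w

/-- `w` is matched by `r`. -/
def WMatched (r : M → W → Prop) (w : W) : Prop := ∃ m, r m w

/-- `(m, w)` blocks `r`: the pair is acceptable, `m` is unmatched or prefers `w`
to his partner, and `w` is unmatched or prefers `m` to her partner. -/
def Blocks (r : M → W → Prop) (m : M) (w : W) : Prop :=
  I.acc m w ∧
  (∀ w', r m w' → I.pm m w < I.pm m w') ∧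
  (∀ m', r m' w → I.pw w m < I.pw w m')

/-- A stable matching: a matching with no blocking pair. -/
def IsStable (r : M → W → Prop) : Prop :=
  I.IsMatching r ∧ ∀ m w, ¬ I.Blocks r m w

/-- Sum of the men's preference values over the pairs of a matching. -/
noncomputable def sumM [Fintype M] [Fintype W] (r : M → W → Prop) : ℕ :=
  ∑ p ∈ Finset.univ.filter (fun p : M × W => r p.1 p.2), I.pm p.1 p.2

/-- Sum of the women's preference values over the pairs of a matching. -/
noncomputable def sumW [Fintype M] [Fintype W] (r : M → W → Prop) : ℕ :=
  ∑ p ∈ Finset.univ.filter (fun p : M × W => r p.1 p.2), I.pw p.2 p.1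

/-- Balance of a matching. -/
noncomputable def bal [Fintype M] [Fintype W] (r : M → W → Prop) : ℕ :=
  max (I.sumM r) (I.sumW r)

/-- Blocking pair for a perfect matching given as an equivalence `M ≃ W`. -/
def BlocksE (e : M ≃ W) (m : M) (w : W) : Prop :=
  I.acc m w ∧ I.pm m w < I.pm m (e m) ∧ I.pw w m < I.pw w (e.symm w)

/-- A stable perfect matching: all matched pairs acceptable, no blocking pair. -/
def IsStableE (e : M ≃ W) : Prop :=
  (∀ m, I.acc m (e m)) ∧ ∀ m w, ¬ I.BlocksE e m w

/-- Sum of the men's preference values in a perfect matching. -/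
def sumME [Fintype M] (e : M ≃ W) : ℕ := ∑ m, I.pm m (e m)

/-- Sum of the women's preference values in a perfect matching. -/
def sumWE [Fintype W] (e : M ≃ W) : ℕ := ∑ w, I.pw w (e.symm w)

/-- Balance of a perfect matching. -/
def balE [Fintype M] [Fintype W] (e : M ≃ W) : ℕ := max (I.sumME e) (I.sumWE e)

end SMInst

/-- In a suffix-clean instance, every person not matched by μ_M has
an empty set of acceptable partners. -/
theorem unmatched_has_no_acceptable_partner {M W : Type*} (I : SMInst M W)
    (μM μW : M → W → Prop) (hμM : I.IsStable μM) (hμW : I.IsStable μW)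
    (hinjm : ∀ m w w', I.acc m w → I.acc m w' → I.pm m w = I.pm m w' → w = w')
    (hinjw : ∀ w m m', I.acc m w → I.acc m' w → I.pw w m = I.pw w m' → m = m')
    (hruralHospitals : ∀ μ : M → W → Prop, I.IsStable μ →
      (∀ m, SMInst.MMatched μ m ↔ SMInst.MMatched μM m) ∧
      (∀ w, SMInst.WMatched μ w ↔ SMInst.WMatched μM w))
    (hsuffixClean : ∀ m w, I.acc m w →
      (∀ w', μW m w' → I.pm m w ≤ I.pm m w') ∧
      (∀ m', μM m' w → I.pw w m ≤ I.pw w m')) :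
    (∀ m, ¬ SMInst.MMatched μM m → ∀ w, ¬ I.acc m w) ∧
    (∀ w, ¬ SMInst.WMatched μM w → ∀ m, ¬ I.acc m w) := by
  constructor
  · intro m hm w hacc
    have hnb := hμM.2 m w
    have : ∃ m', μM m' w ∧ ¬ I.pw w m < I.pw w m' := by
      by_contra hc
      push_neg at hc
      exact hnb ⟨hacc, fun w' hw' => absurd ⟨w', hw'⟩ hm,
        fun m' hm' => hc m' hm'⟩
    obtain ⟨m', hm'w, hle⟩ := this
    have hle' := (hsuffixClean m w hacc).2 m' hm'w
    have heq : I.pw w m = I.pw w m' := le_antisymm hle' (not_lt.mp hle)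
    have hacc' := hμM.1.1 m' w hm'w
    have : m = m' := hinjw w m m' hacc hacc' heq
    exact hm ⟨w, this ▸ hm'w⟩
  · intro w hw m hacc
    have hwW : ¬ SMInst.WMatched μW w := fun h =>
      hw (((hruralHospitals μW hμW).2 w).mp h)
    have hnb := hμW.2 m w
    have : ∃ w', μW m w' ∧ ¬ I.pm m w < I.pm m w' := by
      by_contra hc
      push_neg at hc
      exact hnb ⟨hacc, fun w' hw' => hc w' hw',
        fun m' hm' => absurd ⟨m', hm'⟩ hwW⟩
    obtain ⟨w', hmw', hle⟩ := this
    have hle' := (hsuffixClean m w hacc).1 w' hmw'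
    have heq : I.pm m w = I.pm m w' := le_antisymm hle' (not_lt.mp hle)
    have hacc' := hμW.1.1 m w' hmw'
    have : w = w' := hinjm m w w' hacc hacc' heq
    exact hwW ⟨m, this ▸ hmw'⟩
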